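/- arXiv:2311.07035 — 2 statements merged into one kernel-verified Lean document; each statement's English description precedes it below -/
import Mathlib

section
/- Let Ω = [a,b] with a < b, f : Ω×Ω → ℝ continuous, ε > 0, and suppose d > 0 is such that |f(x,y) − f(x,z)| ≤ ε/(4(b−a)) whenever y,z ∈ Ω with |y−z| < d. Let K_ℓ(x,y) = (1/(ℓ√(2π))) exp(−(x−y)²/(2ℓ²)). If ℓ < min{ d/√(2 log(8‖f‖_∞(b−a)/ε)), 5ε/(26‖f‖_∞) }, then |∫_Ω∫_Ω f(x,y) K_ℓ(x,y) dx dy − ∫_Ω f(x,x) dx| < ε. -/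
open MeasureTheory

section Aux

open Set Real

variable {ℓ : ℝ} (hℓ : 0 < ℓ)

/-- The normalized Gaussian kernel as a function of the difference. -/
noncomputable def gk (ℓ t : ℝ) : ℝ :=
  (1 / (ℓ * Real.sqrt (2 * Real.pi))) * Real.exp (-t ^ 2 / (2 * ℓ ^ 2))

lemma gk_nonneg (hℓ : 0 < ℓ) (t : ℝ) : 0 ≤ gk ℓ t := by
  unfold gk
  have h2π : 0 < Real.sqrt (2 * Real.pi) := Real.sqrt_pos.mpr (by positivity)
  positivity

lemma gk_continuous : Continuous (gk ℓ) := by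
  unfold gk
  fun_prop

lemma gk_even (t : ℝ) : gk ℓ (-t) = gk ℓ t := by
  simp [gk, neg_sq]

lemma exp_eq_gaussian (t : ℝ) :
    Real.exp (-t ^ 2 / (2 * ℓ ^ 2)) = Real.exp (-(2 * ℓ ^ 2)⁻¹ * t ^ 2) := by
  have h : -t ^ 2 / (2 * ℓ ^ 2) = -(2 * ℓ ^ 2)⁻¹ * t ^ 2 := by ring
  rw [h]

include hℓ

lemma gauss_integrable : Integrable (fun t : ℝ => Real.exp (-t ^ 2 / (2 * ℓ ^ 2))) := by
  simp_rw [exp_eq_gaussian]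
  exact integrable_exp_neg_mul_sq (by positivity)

lemma gauss_integral : ∫ t : ℝ, Real.exp (-t ^ 2 / (2 * ℓ ^ 2)) = ℓ * Real.sqrt (2 * Real.pi) := by
  simp_rw [exp_eq_gaussian]
  rw [integral_gaussian]
  rw [show Real.pi / (2 * ℓ ^ 2)⁻¹ = ℓ ^ 2 * (2 * Real.pi) by field_simp]
  rw [Real.sqrt_mul (by positivity), Real.sqrt_sq hℓ.le]

lemma gauss_integral_Ioi :
    ∫ t in Set.Ioi (0 : ℝ), Real.exp (-t ^ 2 / (2 * ℓ ^ 2))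
      = ℓ * Real.sqrt (2 * Real.pi) / 2 := by
  simp_rw [exp_eq_gaussian]
  rw [integral_gaussian_Ioi]
  rw [show Real.pi / (2 * ℓ ^ 2)⁻¹ = ℓ ^ 2 * (2 * Real.pi) by field_simp]
  rw [Real.sqrt_mul (by positivity), Real.sqrt_sq hℓ.le]

lemma gk_integrable : Integrable (gk ℓ) := by
  exact (gauss_integrable hℓ).const_mul _

lemma gk_integral : ∫ t : ℝ, gk ℓ t = 1 := by
  unfold gk
  rw [integral_const_mul, gauss_integral hℓ]
  have h2π : 0 < Real.sqrt (2 * Real.pi) := Real.sqrt_pos.mpr (by positivity)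
  field_simp

omit hℓ

/-- Substitution `t = x - y` for set integrals. -/
lemma integral_sub_left' (g : ℝ → ℝ) (x : ℝ) (S : Set ℝ) :
    ∫ y in (fun y : ℝ => x - y) ⁻¹' S, g (x - y) = ∫ t in S, g t :=
  (Measure.measurePreserving_sub_left volume x).setIntegral_preimage_emb
    (MeasurableEquiv.subLeft x).measurableEmbedding g S

/-- Substitution `t = y - c` for set integrals. -/
lemma integral_sub_right' (g : ℝ → ℝ) (c : ℝ) (S : Set ℝ) :
    ∫ y in (fun y : ℝ => y - c) ⁻¹' S, g (y - c) = ∫ t in S, g t :=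
  (measurePreserving_sub_right volume c).setIntegral_preimage_emb
    (MeasurableEquiv.subRight c).measurableEmbedding g S

include hℓ

lemma gk_shift_integrable (x : ℝ) : Integrable (fun y : ℝ => gk ℓ (x - y)) :=
  (integrable_comp_sub_left (gk ℓ) x).mpr (gk_integrable hℓ)

lemma gk_shift_total (x : ℝ) : ∫ y : ℝ, gk ℓ (x - y) = 1 := by
  have h := integral_sub_left' (gk ℓ) x Set.univ
  simp only [Set.preimage_univ, Measure.restrict_univ] at h
  rw [h, gk_integral hℓ]

lemma gk_set_le_one (x : ℝ) (S : Set ℝ) : ∫ y in S, gk ℓ (x - y) ≤ 1 := by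
  rw [← gk_shift_total hℓ x]
  exact setIntegral_le_integral (gk_shift_integrable hℓ x)
    (Filter.Eventually.of_forall fun y => by simpa using gk_nonneg hℓ (x - y))

/-- Gaussian tail bound: `∫_{t>c} gk ≤ (1/2) exp (-c²/(2ℓ²))` for `c ≥ 0`. -/
lemma gk_tail (c : ℝ) (hc : 0 ≤ c) :
    ∫ t in Set.Ioi c, gk ℓ t ≤ (1 / 2) * Real.exp (-c ^ 2 / (2 * ℓ ^ 2)) := by
  have h2π : 0 < Real.sqrt (2 * Real.pi) := Real.sqrt_pos.mpr (by positivity)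
  have key : ∫ t in Set.Ioi c, Real.exp (-t ^ 2 / (2 * ℓ ^ 2))
      ≤ Real.exp (-c ^ 2 / (2 * ℓ ^ 2)) * (ℓ * Real.sqrt (2 * Real.pi) / 2) := by
    have hshift : Integrable (fun t : ℝ => Real.exp (-(t - c) ^ 2 / (2 * ℓ ^ 2))) := by
      have : (fun t : ℝ => Real.exp (-(t - c) ^ 2 / (2 * ℓ ^ 2)))
          = fun t : ℝ => Real.exp (-(c - t) ^ 2 / (2 * ℓ ^ 2)) := by
        funext t
        rw [show (c - t) ^ 2 = (t - c) ^ 2 by ring]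
      rw [this]
      exact (integrable_comp_sub_left
        (fun u : ℝ => Real.exp (-u ^ 2 / (2 * ℓ ^ 2))) c).mpr (gauss_integrable hℓ)
    have step1 : ∫ t in Set.Ioi c, Real.exp (-t ^ 2 / (2 * ℓ ^ 2))
        ≤ ∫ t in Set.Ioi c,
            Real.exp (-c ^ 2 / (2 * ℓ ^ 2)) * Real.exp (-(t - c) ^ 2 / (2 * ℓ ^ 2)) := by
      apply setIntegral_mono_on
      · exact (gauss_integrable hℓ).integrableOn
      · exact (hshift.const_mul _).integrableOn
      · exact measurableSet_Ioi
      · intro t ht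
        rw [← Real.exp_add]
        apply Real.exp_le_exp.mpr
        have h1 : c ^ 2 + (t - c) ^ 2 ≤ t ^ 2 := by nlinarith [Set.mem_Ioi.mp ht]
        have hℓ2 : (0:ℝ) < 2 * ℓ ^ 2 := by positivity
        rw [← add_div]
        gcongr ?_ / _
        linarith

    have step2 : ∫ t in Set.Ioi c, Real.exp (-(t - c) ^ 2 / (2 * ℓ ^ 2))
        = ℓ * Real.sqrt (2 * Real.pi) / 2 := by
      have hpre : (fun y : ℝ => y - c) ⁻¹' (Set.Ioi 0) = Set.Ioi c := by
        ext y; simp [Set.mem_Ioi, sub_pos]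
      have h := integral_sub_right' (fun u : ℝ => Real.exp (-u ^ 2 / (2 * ℓ ^ 2))) c (Set.Ioi 0)
      rw [hpre] at h
      rw [h, gauss_integral_Ioi hℓ]
    calc ∫ t in Set.Ioi c, Real.exp (-t ^ 2 / (2 * ℓ ^ 2))
        ≤ ∫ t in Set.Ioi c,
            Real.exp (-c ^ 2 / (2 * ℓ ^ 2)) * Real.exp (-(t - c) ^ 2 / (2 * ℓ ^ 2)) := step1
      _ = Real.exp (-c ^ 2 / (2 * ℓ ^ 2))
            * ∫ t in Set.Ioi c, Real.exp (-(t - c) ^ 2 / (2 * ℓ ^ 2)) := by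
          rw [integral_const_mul]
      _ = Real.exp (-c ^ 2 / (2 * ℓ ^ 2)) * (ℓ * Real.sqrt (2 * Real.pi) / 2) := by rw [step2]
  unfold gk
  rw [integral_const_mul]
  calc (1 / (ℓ * Real.sqrt (2 * Real.pi))) * ∫ t in Set.Ioi c, Real.exp (-t ^ 2 / (2 * ℓ ^ 2))
      ≤ (1 / (ℓ * Real.sqrt (2 * Real.pi)))
          * (Real.exp (-c ^ 2 / (2 * ℓ ^ 2)) * (ℓ * Real.sqrt (2 * Real.pi) / 2)) := by
        apply mul_le_mul_of_nonneg_left key (by positivity)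
    _ = (1 / 2) * Real.exp (-c ^ 2 / (2 * ℓ ^ 2)) := by
        field_simp

end Aux


section Pointwise

open Set Real

/-- Pointwise (in `x`) bias bound for the smoothed kernel. -/
lemma pointwise_bound (a b : ℝ) (hab : a < b) (f : ℝ → ℝ → ℝ)
    (hf : ContinuousOn (fun p : ℝ × ℝ => f p.1 p.2) (Set.Icc a b ×ˢ Set.Icc a b))
    (ε : ℝ) (M : ℝ) (hM : 0 < M)
    (hMf : ∀ x ∈ Set.Icc a b, ∀ y ∈ Set.Icc a b, |f x y| ≤ M)
    (d : ℝ) (hd : 0 < d)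
    (hmod : ∀ x ∈ Set.Icc a b, ∀ y ∈ Set.Icc a b, ∀ z ∈ Set.Icc a b,
      |y - z| < d → |f x y - f x z| ≤ ε / (4 * (b - a)))
    (ℓ : ℝ) (hℓ : 0 < ℓ) (x : ℝ) (hx : x ∈ Set.Icc a b) :
    |(∫ y in Set.Icc a b, f x y * gk ℓ (x - y)) - f x x|
      ≤ ε / (4 * (b - a)) + 2 * M * Real.exp (-d ^ 2 / (2 * ℓ ^ 2))
        + M / 2 * (Real.exp (-(x - a) ^ 2 / (2 * ℓ ^ 2))
          + Real.exp (-(b - x) ^ 2 / (2 * ℓ ^ 2))) := by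
  obtain ⟨hxa, hxb⟩ := hx
  have hx' : x ∈ Set.Icc a b := ⟨hxa, hxb⟩
  have hfx : ContinuousOn (f x) (Set.Icc a b) := by
    have h1 : ContinuousOn (fun y : ℝ => (x, y)) (Set.Icc a b) :=
      (Continuous.prodMk_right x).continuousOn
    exact hf.comp h1 (fun y hy => ⟨hx', hy⟩)
  have hgkc : Continuous (fun y : ℝ => gk ℓ (x - y)) :=
    (gk_continuous (ℓ := ℓ)).comp (continuous_const.sub continuous_id)
  have int_fψ : IntegrableOn (fun y => f x y * gk ℓ (x - y)) (Set.Icc a b) :=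
    (hfx.mul hgkc.continuousOn).integrableOn_Icc
  have int_ψ : IntegrableOn (fun y => gk ℓ (x - y)) (Set.Icc a b) :=
    (gk_shift_integrable hℓ x).integrableOn
  set m : ℝ := ∫ y in Set.Icc a b, gk ℓ (x - y) with hm_def
  -- edge estimate: 1 - m
  have hm_eq : m = ∫ t in Set.Icc (x - b) (x - a), gk ℓ t := by
    have hpre : (fun y : ℝ => x - y) ⁻¹' (Set.Icc (x - b) (x - a)) = Set.Icc a b := by
      ext y
      simp only [Set.mem_preimage, Set.mem_Icc]
      constructor
      · rintro ⟨h1, h2⟩; constructor <;> linarith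
      · rintro ⟨h1, h2⟩; constructor <;> linarith
    rw [hm_def, ← integral_sub_left' (gk ℓ) x (Set.Icc (x - b) (x - a)), hpre]
  have hsplit1 : (∫ t in Set.Icc (x - b) (x - a), gk ℓ t)
      + ∫ t in (Set.Icc (x - b) (x - a))ᶜ, gk ℓ t = 1 := by
    rw [integral_add_compl measurableSet_Icc (gk_integrable hℓ), gk_integral hℓ]
  have hcompl : (Set.Icc (x - b) (x - a))ᶜ = Set.Iio (x - b) ∪ Set.Ioi (x - a) := by
    ext t
    simp only [Set.mem_compl_iff, Set.mem_Icc, Set.mem_union, Set.mem_Iio, Set.mem_Ioi,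
      not_and_or, not_le]
  have tail_Iio : ∀ c : ℝ, ∫ t in Set.Iio c, gk ℓ t = ∫ t in Set.Ioi (-c), gk ℓ t := by
    intro c
    rw [← integral_Iic_eq_integral_Iio]
    have h := integral_comp_neg_Iic c (gk ℓ)
    simpa only [gk_even] using h
  have hunion : ∫ t in Set.Iio (x - b) ∪ Set.Ioi (x - a), gk ℓ t
      = (∫ t in Set.Iio (x - b), gk ℓ t) + ∫ t in Set.Ioi (x - a), gk ℓ t := by
    apply setIntegral_union
    · rw [Set.disjoint_left]
      intro t ht1 ht2
      simp only [Set.mem_Iio] at ht1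
      simp only [Set.mem_Ioi] at ht2
      linarith
    · exact measurableSet_Ioi
    · exact (gk_integrable hℓ).integrableOn
    · exact (gk_integrable hℓ).integrableOn
  have edge1 : ∫ t in Set.Iio (x - b), gk ℓ t
      ≤ (1 / 2) * Real.exp (-(b - x) ^ 2 / (2 * ℓ ^ 2)) := by
    rw [tail_Iio, show -(x - b) = b - x by ring]
    exact gk_tail hℓ (b - x) (by linarith)
  have edge2 : ∫ t in Set.Ioi (x - a), gk ℓ t
      ≤ (1 / 2) * Real.exp (-(x - a) ^ 2 / (2 * ℓ ^ 2)) :=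
    gk_tail hℓ (x - a) (by linarith)
  have tail1_nonneg : 0 ≤ ∫ t in Set.Iio (x - b), gk ℓ t :=
    setIntegral_nonneg measurableSet_Iio (fun t _ => gk_nonneg hℓ t)
  have tail2_nonneg : 0 ≤ ∫ t in Set.Ioi (x - a), gk ℓ t :=
    setIntegral_nonneg measurableSet_Ioi (fun t _ => gk_nonneg hℓ t)
  have h1m : 1 - m = (∫ t in Set.Iio (x - b), gk ℓ t) + ∫ t in Set.Ioi (x - a), gk ℓ t := by
    rw [hm_eq]
    rw [hcompl, hunion] at hsplit1
    linarith
  have h1m_nonneg : 0 ≤ 1 - m := by rw [h1m]; positivity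
  have h1m_le : 1 - m ≤ (1 / 2) * (Real.exp (-(x - a) ^ 2 / (2 * ℓ ^ 2))
      + Real.exp (-(b - x) ^ 2 / (2 * ℓ ^ 2))) := by
    rw [h1m]; linarith
  -- decomposition
  have key : (∫ y in Set.Icc a b, f x y * gk ℓ (x - y)) - f x x * m
      = ∫ y in Set.Icc a b, (f x y - f x x) * gk ℓ (x - y) := by
    have h1 : ∫ y in Set.Icc a b, (f x y - f x x) * gk ℓ (x - y)
        = ∫ y in Set.Icc a b, (f x y * gk ℓ (x - y) - f x x * gk ℓ (x - y)) := by
      congr 1; funext y; ring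
    rw [h1, integral_sub int_fψ (int_ψ.const_mul (f x x)), hm_def,
      MeasureTheory.integral_const_mul]
  -- abs bound on the difference integral
  set Δ : ℝ → ℝ := fun y => |f x y - f x x| * gk ℓ (x - y) with hΔ_def
  have habs_eq : (fun y => |f x y * gk ℓ (x - y) - f x x * gk ℓ (x - y)|) = Δ := by
    funext y
    rw [hΔ_def, ← sub_mul, abs_mul, abs_of_nonneg (gk_nonneg hℓ _)]
  have intΔ : IntegrableOn Δ (Set.Icc a b) := by
    rw [← habs_eq]
    exact (int_fψ.sub (int_ψ.const_mul (f x x))).abs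
  have habs : |∫ y in Set.Icc a b, (f x y - f x x) * gk ℓ (x - y)|
      ≤ ∫ y in Set.Icc a b, Δ y := by
    have h := norm_integral_le_integral_norm
      (μ := volume.restrict (Set.Icc a b)) (fun y => (f x y - f x x) * gk ℓ (x - y))
    have h2 : (fun y => ‖(f x y - f x x) * gk ℓ (x - y)‖) = Δ := by
      funext y
      rw [Real.norm_eq_abs, hΔ_def, abs_mul, abs_of_nonneg (gk_nonneg hℓ _)]
    rw [Real.norm_eq_abs] at h
    calc |∫ y in Set.Icc a b, (f x y - f x x) * gk ℓ (x - y)|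
        ≤ ∫ y in Set.Icc a b, ‖(f x y - f x x) * gk ℓ (x - y)‖ := h
      _ = ∫ y in Set.Icc a b, Δ y := by rw [h2]
  -- split near/far
  set N : Set ℝ := Set.Icc a b ∩ Set.Ioo (x - d) (x + d) with hN_def
  set F : Set ℝ := Set.Icc a b \ Set.Ioo (x - d) (x + d) with hF_def
  have hsplit2 : (∫ y in N, Δ y) + ∫ y in F, Δ y = ∫ y in Set.Icc a b, Δ y :=
    integral_inter_add_diff measurableSet_Ioo intΔ
  have hnear : ∫ y in N, Δ y ≤ ε / (4 * (b - a)) := by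
    have step1 : ∫ y in N, Δ y ≤ ∫ y in N, (ε / (4 * (b - a))) * gk ℓ (x - y) := by
      apply setIntegral_mono_on (intΔ.mono_set Set.inter_subset_left)
        (IntegrableOn.mono_set (int_ψ.const_mul _) Set.inter_subset_left)
        (measurableSet_Icc.inter measurableSet_Ioo)
      rintro y ⟨hy1, hy2⟩
      apply mul_le_mul_of_nonneg_right _ (gk_nonneg hℓ _)
      apply hmod x hx' y hy1 x hx'
      rw [abs_sub_lt_iff]
      obtain ⟨h3, h4⟩ := hy2
      constructor <;> linarith
    have step2 : ∫ y in N, (ε / (4 * (b - a))) * gk ℓ (x - y)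
        = (ε / (4 * (b - a))) * ∫ y in N, gk ℓ (x - y) := MeasureTheory.integral_const_mul _ _
    have hεnn : 0 ≤ ε / (4 * (b - a)) := by
      have := hmod x hx' x hx' x hx' (by simpa using hd)
      simpa using le_trans (abs_nonneg _) this
    calc ∫ y in N, Δ y ≤ (ε / (4 * (b - a))) * ∫ y in N, gk ℓ (x - y) := by
          rw [← step2]; exact step1
      _ ≤ (ε / (4 * (b - a))) * 1 :=
          mul_le_mul_of_nonneg_left (gk_set_le_one hℓ x N) hεnn
      _ = ε / (4 * (b - a)) := mul_one _
  have hfar : ∫ y in F, Δ y ≤ 2 * M * Real.exp (-d ^ 2 / (2 * ℓ ^ 2)) := by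
    have step1 : ∫ y in F, Δ y ≤ ∫ y in F, (2 * M) * gk ℓ (x - y) := by
      apply setIntegral_mono_on (intΔ.mono_set Set.diff_subset)
        (IntegrableOn.mono_set (int_ψ.const_mul _) Set.diff_subset)
        (measurableSet_Icc.diff measurableSet_Ioo)
      rintro y ⟨hy1, _⟩
      apply mul_le_mul_of_nonneg_right _ (gk_nonneg hℓ _)
      calc |f x y - f x x| ≤ |f x y| + |f x x| := abs_sub _ _
        _ ≤ M + M := add_le_add (hMf x hx' y hy1) (hMf x hx' x hx')
        _ = 2 * M := by ring
    have hsub : F ⊆ (fun y : ℝ => x - y) ⁻¹' (Set.Iic (-d) ∪ Set.Ici d) := by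
      rintro y ⟨_, hy2⟩
      simp only [Set.mem_Ioo, not_and_or, not_lt] at hy2
      simp only [Set.mem_preimage, Set.mem_union, Set.mem_Iic, Set.mem_Ici]
      rcases hy2 with h | h
      · right; linarith
      · left; linarith
    have step2 : ∫ y in F, gk ℓ (x - y)
        ≤ ∫ y in (fun y : ℝ => x - y) ⁻¹' (Set.Iic (-d) ∪ Set.Ici d), gk ℓ (x - y) := by
      apply setIntegral_mono_set ((gk_shift_integrable hℓ x).integrableOn)
        (Filter.Eventually.of_forall fun y => gk_nonneg hℓ _)
        (HasSubset.Subset.eventuallyLE hsub)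
    have step3 : ∫ y in (fun y : ℝ => x - y) ⁻¹' (Set.Iic (-d) ∪ Set.Ici d), gk ℓ (x - y)
        = ∫ t in Set.Iic (-d) ∪ Set.Ici d, gk ℓ t := integral_sub_left' (gk ℓ) x _
    have step4 : ∫ t in Set.Iic (-d) ∪ Set.Ici d, gk ℓ t
        = (∫ t in Set.Iic (-d), gk ℓ t) + ∫ t in Set.Ici d, gk ℓ t := by
      apply setIntegral_union (Set.Iic_disjoint_Ici.mpr (not_le.mpr (by linarith))) measurableSet_Ici
        (gk_integrable hℓ).integrableOn (gk_integrable hℓ).integrableOn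
    have step5 : ∫ t in Set.Iic (-d), gk ℓ t = ∫ t in Set.Ioi d, gk ℓ t := by
      have h := integral_comp_neg_Iic (-d) (gk ℓ)
      simpa only [gk_even, neg_neg] using h
    have step6 : ∫ t in Set.Ici d, gk ℓ t = ∫ t in Set.Ioi d, gk ℓ t :=
      integral_Ici_eq_integral_Ioi
    have htail : ∫ t in Set.Ioi d, gk ℓ t ≤ (1 / 2) * Real.exp (-d ^ 2 / (2 * ℓ ^ 2)) :=
      gk_tail hℓ d hd.le
    calc ∫ y in F, Δ y ≤ ∫ y in F, (2 * M) * gk ℓ (x - y) := step1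
      _ = (2 * M) * ∫ y in F, gk ℓ (x - y) := MeasureTheory.integral_const_mul _ _
      _ ≤ (2 * M) * ((1 / 2) * Real.exp (-d ^ 2 / (2 * ℓ ^ 2))
            + (1 / 2) * Real.exp (-d ^ 2 / (2 * ℓ ^ 2))) := by
          apply mul_le_mul_of_nonneg_left _ (by positivity)
          calc ∫ y in F, gk ℓ (x - y)
              ≤ ∫ t in Set.Iic (-d) ∪ Set.Ici d, gk ℓ t := by rw [← step3]; exact step2
            _ = (∫ t in Set.Iic (-d), gk ℓ t) + ∫ t in Set.Ici d, gk ℓ t := step4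
            _ ≤ (1 / 2) * Real.exp (-d ^ 2 / (2 * ℓ ^ 2))
                + (1 / 2) * Real.exp (-d ^ 2 / (2 * ℓ ^ 2)) := by
                rw [step5, step6]; exact add_le_add htail htail
      _ = 2 * M * Real.exp (-d ^ 2 / (2 * ℓ ^ 2)) := by ring
  have hΔnonneg : 0 ≤ ∫ y in N, Δ y :=
    setIntegral_nonneg (measurableSet_Icc.inter measurableSet_Ioo)
      (fun y _ => mul_nonneg (abs_nonneg _) (gk_nonneg hℓ _))
  -- combine
  have hfxx : |f x x| ≤ M := hMf x hx' x hx'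
  have final : (∫ y in Set.Icc a b, f x y * gk ℓ (x - y)) - f x x
      = (∫ y in Set.Icc a b, (f x y - f x x) * gk ℓ (x - y)) - f x x * (1 - m) := by
    rw [← key]; ring
  rw [final]
  calc |(∫ y in Set.Icc a b, (f x y - f x x) * gk ℓ (x - y)) - f x x * (1 - m)|
      ≤ |∫ y in Set.Icc a b, (f x y - f x x) * gk ℓ (x - y)| + |f x x * (1 - m)| :=
        abs_sub _ _
    _ ≤ (∫ y in Set.Icc a b, Δ y) + M * (1 - m) := by
        apply add_le_add habs
        rw [abs_mul, abs_of_nonneg h1m_nonneg]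
        exact mul_le_mul_of_nonneg_right hfxx h1m_nonneg
    _ ≤ (ε / (4 * (b - a)) + 2 * M * Real.exp (-d ^ 2 / (2 * ℓ ^ 2)))
          + M * ((1 / 2) * (Real.exp (-(x - a) ^ 2 / (2 * ℓ ^ 2))
            + Real.exp (-(b - x) ^ 2 / (2 * ℓ ^ 2)))) := by
        apply add_le_add
        · rw [← hsplit2]; exact add_le_add hnear hfar
        · exact mul_le_mul_of_nonneg_left h1m_le hM.le
    _ = ε / (4 * (b - a)) + 2 * M * Real.exp (-d ^ 2 / (2 * ℓ ^ 2))
          + M / 2 * (Real.exp (-(x - a) ^ 2 / (2 * ℓ ^ 2))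
            + Real.exp (-(b - x) ^ 2 / (2 * ℓ ^ 2))) := by ring

end Pointwise


/-- Bias bound for the continuous Hutchinson estimator (Theorem 4.1):
with `K_ℓ` the normalized squared-exponential kernel and `ℓ` small enough,
`|E[H_m(f)] − tr(f)| = |∫∫ f·K_ℓ − ∫ f(x,x) dx| < ε`.
Here `M = ‖f‖_∞`, an upper bound for `|f|` on `Ω × Ω`. -/
theorem contHutch_expectation_bias
    (a b : ℝ) (hab : a < b) (f : ℝ → ℝ → ℝ)
    (hf : ContinuousOn (fun p : ℝ × ℝ => f p.1 p.2) (Set.Icc a b ×ˢ Set.Icc a b))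
    (ε : ℝ) (hε : 0 < ε) (M : ℝ) (hM : 0 < M)
    (hMf : ∀ x ∈ Set.Icc a b, ∀ y ∈ Set.Icc a b, |f x y| ≤ M)
    (d : ℝ) (hd : 0 < d)
    (hmod : ∀ x ∈ Set.Icc a b, ∀ y ∈ Set.Icc a b, ∀ z ∈ Set.Icc a b,
      |y - z| < d → |f x y - f x z| ≤ ε / (4 * (b - a)))
    (ℓ : ℝ) (hℓ : 0 < ℓ)
    (hℓlt : ℓ < min (d / Real.sqrt (2 * Real.log (8 * M * (b - a) / ε)))
      (5 * ε / (26 * M))) :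
    |(∫ x in Set.Icc a b, ∫ y in Set.Icc a b,
        f x y * ((1 / (ℓ * Real.sqrt (2 * Real.pi))) *
          Real.exp (-(x - y) ^ 2 / (2 * ℓ ^ 2))))
      - ∫ x in Set.Icc a b, f x x| < ε := by
  have hba : (0:ℝ) < b - a := sub_pos.mpr hab
  have h2π : 0 < Real.sqrt (2 * Real.pi) := Real.sqrt_pos.mpr (by positivity)
  -- the kernel is `gk`
  have hgk : ∀ x y : ℝ, (1 / (ℓ * Real.sqrt (2 * Real.pi))) *
      Real.exp (-(x - y) ^ 2 / (2 * ℓ ^ 2)) = gk ℓ (x - y) := fun x y => rfl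
  simp only [hgk]
  -- constants
  set E : ℝ := Real.exp (-d ^ 2 / (2 * ℓ ^ 2)) with hE_def
  -- tail smallness from the first bound on ℓ
  have hℓ1 : ℓ < d / Real.sqrt (2 * Real.log (8 * M * (b - a) / ε)) :=
    lt_of_lt_of_le hℓlt (min_le_left _ _)
  have hℓ2 : ℓ < 5 * ε / (26 * M) := lt_of_lt_of_le hℓlt (min_le_right _ _)
  have hA : (0:ℝ) < 8 * M * (b - a) / ε := by positivity
  have hE_lt : E < ε / (8 * M * (b - a)) := by
    set s := Real.sqrt (2 * Real.log (8 * M * (b - a) / ε)) with hs_def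
    have hs : 0 < s := by
      rcases lt_or_ge 0 s with h | h
      · exact h
      · exfalso
        have hs0 : s = 0 := le_antisymm h (Real.sqrt_nonneg _)
        rw [hs0, div_zero] at hℓ1
        linarith
    have hlog : 0 < Real.log (8 * M * (b - a) / ε) := by
      have h2 := Real.sqrt_pos.mp hs
      linarith
    have hℓs : ℓ * s < d := (lt_div_iff₀ hs).mp hℓ1
    have hsq : (ℓ * s) ^ 2 < d ^ 2 := by
      apply pow_lt_pow_left₀ hℓs (by positivity)
      norm_num
    rw [mul_pow, hs_def, Real.sq_sqrt (by linarith)] at hsq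
    have hdd : Real.log (8 * M * (b - a) / ε) < d ^ 2 / (2 * ℓ ^ 2) := by
      rw [lt_div_iff₀ (by positivity)]
      nlinarith
    have h3 : E < Real.exp (-Real.log (8 * M * (b - a) / ε)) := by
      rw [hE_def]
      apply Real.exp_lt_exp.mpr
      have hh : -d ^ 2 / (2 * ℓ ^ 2) = -(d ^ 2 / (2 * ℓ ^ 2)) := by ring
      rw [hh]
      linarith
    rw [Real.exp_neg, Real.exp_log hA, inv_div] at h3
    exact h3
  have hE_pos : 0 < E := Real.exp_pos _
  -- integrability of the diagonal
  have hdiag_cont : ContinuousOn (fun x => f x x) (Set.Icc a b) := by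
    have h1 : ContinuousOn (fun x : ℝ => (x, x)) (Set.Icc a b) :=
      (continuous_id.prodMk continuous_id).continuousOn
    exact hf.comp h1 (fun x hx => ⟨hx, hx⟩)
  have int_diag : IntegrableOn (fun x => f x x) (Set.Icc a b) := hdiag_cont.integrableOn_Icc
  -- measurability and integrability of the inner integral
  have hFmeas : AEStronglyMeasurable (fun p : ℝ × ℝ => f p.1 p.2 * gk ℓ (p.1 - p.2))
      ((volume.restrict (Set.Icc a b)).prod (volume.restrict (Set.Icc a b))) := by
    rw [Measure.prod_restrict]
    apply ContinuousOn.aestronglyMeasurable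
    · exact hf.mul ((gk_continuous (ℓ := ℓ)).comp
        (continuous_fst.sub continuous_snd)).continuousOn
    · exact measurableSet_Icc.prod measurableSet_Icc
  have hgmeas : AEStronglyMeasurable (fun x => ∫ y in Set.Icc a b, f x y * gk ℓ (x - y))
      (volume.restrict (Set.Icc a b)) := hFmeas.integral_prod_right'
  have hgbdd : ∀ x ∈ Set.Icc a b, ‖∫ y in Set.Icc a b, f x y * gk ℓ (x - y)‖ ≤ M := by
    intro x hx
    rw [Real.norm_eq_abs]
    have h1 : |∫ y in Set.Icc a b, f x y * gk ℓ (x - y)|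
        ≤ ∫ y in Set.Icc a b, M * gk ℓ (x - y) := by
      rw [← Real.norm_eq_abs]
      refine (norm_integral_le_integral_norm _).trans ?_
      apply integral_mono_of_nonneg (Filter.Eventually.of_forall fun y => norm_nonneg _)
        (((gk_shift_integrable hℓ x).integrableOn).const_mul M)
      filter_upwards [ae_restrict_mem measurableSet_Icc] with y hy
      rw [Real.norm_eq_abs, abs_mul, abs_of_nonneg (gk_nonneg hℓ _)]
      exact mul_le_mul_of_nonneg_right (hMf x hx y hy) (gk_nonneg hℓ _)
    calc |∫ y in Set.Icc a b, f x y * gk ℓ (x - y)|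
        ≤ ∫ y in Set.Icc a b, M * gk ℓ (x - y) := h1
      _ = M * ∫ y in Set.Icc a b, gk ℓ (x - y) := MeasureTheory.integral_const_mul _ _
      _ ≤ M * 1 := mul_le_mul_of_nonneg_left (gk_set_le_one hℓ x _) hM.le
      _ = M := mul_one _
  have int_g : IntegrableOn (fun x => ∫ y in Set.Icc a b, f x y * gk ℓ (x - y))
      (Set.Icc a b) := by
    apply Integrable.mono' (integrable_const M) hgmeas
    filter_upwards [ae_restrict_mem measurableSet_Icc] with x hx using hgbdd x hx
  -- the bounding function
  set B : ℝ → ℝ := fun x => ε / (4 * (b - a)) + 2 * M * E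
    + M / 2 * (Real.exp (-(x - a) ^ 2 / (2 * ℓ ^ 2))
      + Real.exp (-(b - x) ^ 2 / (2 * ℓ ^ 2))) with hB_def
  have hBcont : Continuous B := by
    rw [hB_def]; fun_prop
  have int_B : IntegrableOn B (Set.Icc a b) := hBcont.continuousOn.integrableOn_Icc
  -- main estimate
  have hstep1 : |(∫ x in Set.Icc a b, ∫ y in Set.Icc a b, f x y * gk ℓ (x - y))
      - ∫ x in Set.Icc a b, f x x| ≤ ∫ x in Set.Icc a b, B x := by
    rw [← integral_sub int_g int_diag, ← Real.norm_eq_abs]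
    refine (norm_integral_le_integral_norm _).trans ?_
    apply integral_mono_of_nonneg (Filter.Eventually.of_forall fun x => norm_nonneg _)
      int_B
    filter_upwards [ae_restrict_mem measurableSet_Icc] with x hx
    rw [Real.norm_eq_abs]
    exact pointwise_bound a b hab f hf ε M hM hMf d hd hmod ℓ hℓ x hx
  -- computing / bounding ∫ B
  have int_e1 : IntegrableOn (fun x : ℝ => Real.exp (-(x - a) ^ 2 / (2 * ℓ ^ 2)))
      (Set.Icc a b) := (Continuous.continuousOn (by fun_prop)).integrableOn_Icc
  have int_e2 : IntegrableOn (fun x : ℝ => Real.exp (-(b - x) ^ 2 / (2 * ℓ ^ 2)))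
      (Set.Icc a b) := (Continuous.continuousOn (by fun_prop)).integrableOn_Icc
  have hI1 : ∫ x in Set.Icc a b, Real.exp (-(x - a) ^ 2 / (2 * ℓ ^ 2))
      ≤ ℓ * Real.sqrt (2 * Real.pi) / 2 := by
    have hpre : (fun x : ℝ => x - a) ⁻¹' (Set.Icc 0 (b - a)) = Set.Icc a b := by
      ext x
      simp only [Set.mem_preimage, Set.mem_Icc]
      constructor
      · rintro ⟨h1, h2⟩; constructor <;> linarith
      · rintro ⟨h1, h2⟩; constructor <;> linarith
    have h := integral_sub_right' (fun t : ℝ => Real.exp (-t ^ 2 / (2 * ℓ ^ 2))) a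
      (Set.Icc 0 (b - a))
    rw [hpre] at h
    rw [h]
    calc ∫ t in Set.Icc 0 (b - a), Real.exp (-t ^ 2 / (2 * ℓ ^ 2))
        ≤ ∫ t in Set.Ici 0, Real.exp (-t ^ 2 / (2 * ℓ ^ 2)) := by
          apply setIntegral_mono_set ((gauss_integrable hℓ).integrableOn)
            (Filter.Eventually.of_forall fun t => by positivity)
            (HasSubset.Subset.eventuallyLE (Set.Icc_subset_Ici_self))
      _ = ∫ t in Set.Ioi 0, Real.exp (-t ^ 2 / (2 * ℓ ^ 2)) := integral_Ici_eq_integral_Ioi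
      _ = ℓ * Real.sqrt (2 * Real.pi) / 2 := gauss_integral_Ioi hℓ
  have hI2 : ∫ x in Set.Icc a b, Real.exp (-(b - x) ^ 2 / (2 * ℓ ^ 2))
      ≤ ℓ * Real.sqrt (2 * Real.pi) / 2 := by
    have hpre : (fun x : ℝ => b - x) ⁻¹' (Set.Icc 0 (b - a)) = Set.Icc a b := by
      ext x
      simp only [Set.mem_preimage, Set.mem_Icc]
      constructor
      · rintro ⟨h1, h2⟩; constructor <;> linarith
      · rintro ⟨h1, h2⟩; constructor <;> linarith
    have h := integral_sub_left' (fun t : ℝ => Real.exp (-t ^ 2 / (2 * ℓ ^ 2))) b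
      (Set.Icc 0 (b - a))
    rw [hpre] at h
    rw [h]
    calc ∫ t in Set.Icc 0 (b - a), Real.exp (-t ^ 2 / (2 * ℓ ^ 2))
        ≤ ∫ t in Set.Ici 0, Real.exp (-t ^ 2 / (2 * ℓ ^ 2)) := by
          apply setIntegral_mono_set ((gauss_integrable hℓ).integrableOn)
            (Filter.Eventually.of_forall fun t => by positivity)
            (HasSubset.Subset.eventuallyLE (Set.Icc_subset_Ici_self))
      _ = ∫ t in Set.Ioi 0, Real.exp (-t ^ 2 / (2 * ℓ ^ 2)) := integral_Ici_eq_integral_Ioi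
      _ = ℓ * Real.sqrt (2 * Real.pi) / 2 := gauss_integral_Ioi hℓ
  have int_sum : Integrable (fun x : ℝ => Real.exp (-(x - a) ^ 2 / (2 * ℓ ^ 2))
      + Real.exp (-(b - x) ^ 2 / (2 * ℓ ^ 2))) (volume.restrict (Set.Icc a b)) :=
    int_e1.add int_e2
  have hBsum : ∫ x in Set.Icc a b, B x
      = (ε / (4 * (b - a)) + 2 * M * E) * (b - a)
        + M / 2 * ((∫ x in Set.Icc a b, Real.exp (-(x - a) ^ 2 / (2 * ℓ ^ 2)))
          + ∫ x in Set.Icc a b, Real.exp (-(b - x) ^ 2 / (2 * ℓ ^ 2))) := by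
    have h1 : ∫ x in Set.Icc a b, B x
        = ∫ x in Set.Icc a b, (ε / (4 * (b - a)) + 2 * M * E
          + M / 2 * (Real.exp (-(x - a) ^ 2 / (2 * ℓ ^ 2))
            + Real.exp (-(b - x) ^ 2 / (2 * ℓ ^ 2)))) := rfl
    rw [h1, integral_add (integrable_const _) (int_sum.const_mul (M / 2)),
      MeasureTheory.integral_const_mul, integral_add int_e1 int_e2, setIntegral_const,
      Real.volume_real_Icc_of_le hab.le, smul_eq_mul]
    ring
  have total : ∫ x in Set.Icc a b, B x
      < ε / 4 + ε / 4 + ε / 4 := by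
    rw [hBsum]
    have hb1 : (ε / (4 * (b - a)) + 2 * M * E) * (b - a)
        = ε / 4 + 2 * M * (b - a) * E := by
      field_simp
    have hfar : 2 * M * (b - a) * E < ε / 4 := by
      have := mul_lt_mul_of_pos_left hE_lt (show (0:ℝ) < 2 * M * (b - a) by positivity)
      calc 2 * M * (b - a) * E < 2 * M * (b - a) * (ε / (8 * M * (b - a))) := this
        _ = ε / 4 := by field_simp; ring
    have hedge : M / 2 * ((∫ x in Set.Icc a b, Real.exp (-(x - a) ^ 2 / (2 * ℓ ^ 2)))
          + ∫ x in Set.Icc a b, Real.exp (-(b - x) ^ 2 / (2 * ℓ ^ 2)))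
        < ε / 4 := by
      have h1 : M / 2 * ((∫ x in Set.Icc a b, Real.exp (-(x - a) ^ 2 / (2 * ℓ ^ 2)))
            + ∫ x in Set.Icc a b, Real.exp (-(b - x) ^ 2 / (2 * ℓ ^ 2)))
          ≤ M / 2 * (ℓ * Real.sqrt (2 * Real.pi)) := by
        apply mul_le_mul_of_nonneg_left _ (by positivity)
        calc _ ≤ ℓ * Real.sqrt (2 * Real.pi) / 2 + ℓ * Real.sqrt (2 * Real.pi) / 2 :=
              add_le_add hI1 hI2
          _ = ℓ * Real.sqrt (2 * Real.pi) := by ring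
      have hsqrt : Real.sqrt (2 * Real.pi) < 2.6 := by
        rw [show (2.6:ℝ) = Real.sqrt (2.6 ^ 2) by rw [Real.sqrt_sq]; norm_num]
        apply Real.sqrt_lt_sqrt (by positivity)
        nlinarith [Real.pi_lt_d2]
      have h2 : M / 2 * (ℓ * Real.sqrt (2 * Real.pi)) < ε / 4 := by
        have h3 : M / 2 * (ℓ * Real.sqrt (2 * Real.pi)) < M / 2 * ((5 * ε / (26 * M)) * 2.6) := by
          apply mul_lt_mul_of_pos_left _ (by positivity)
          apply mul_lt_mul'' hℓ2 hsqrt hℓ.le (Real.sqrt_nonneg _)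
        calc M / 2 * (ℓ * Real.sqrt (2 * Real.pi))
            < M / 2 * ((5 * ε / (26 * M)) * 2.6) := h3
          _ = ε / 4 := by field_simp; ring
      linarith
    linarith
  calc |(∫ x in Set.Icc a b, ∫ y in Set.Icc a b, f x y * gk ℓ (x - y))
      - ∫ x in Set.Icc a b, f x x| ≤ ∫ x in Set.Icc a b, B x := hstep1
    _ < ε / 4 + ε / 4 + ε / 4 := total
    _ < ε := by linarith
end

section
/- Let f : Ω×Ω → ℝ be a continuous symmetric kernel with associated integral operator F, let K be a continuous symmetric positive semidefinite covariance kernel with operator K_op, and let g ∼ GP(0,K). Define h(g) = ‖2∫_Ω f(·,y)g(y)dy‖_{L²}. Then E[h(g)²] = 4 tr(K F²) ≤ 4 ‖f‖²_{L²} ‖K‖_op, and consequently E[h(g)] ≤ 2 ‖f‖_{L²} ‖K‖_op^{1/2}. -/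
open MeasureTheory
open scoped RealInnerProductSpace

/-- The coordinate permutation `(y, x, z) ↦ (x, y, z)` as a measurable equivalence. -/
noncomputable def permE : (ℝ × ℝ × ℝ) ≃ᵐ ℝ × ℝ × ℝ where
  toEquiv := ⟨fun q => (q.2.1, q.1, q.2.2), fun q => (q.2.1, q.1, q.2.2),
    fun q => rfl, fun q => rfl⟩
  measurable_toFun := by
    exact measurable_snd.fst.prodMk (measurable_fst.prodMk measurable_snd.snd)
  measurable_invFun := by
    exact measurable_snd.fst.prodMk (measurable_fst.prodMk measurable_snd.snd)

/-- The permutation `permE` preserves any triple product measure `(volume.restrict (Set.Icc a b)) ⊗ (volume.restrict (Set.Icc a b)) ⊗ (volume.restrict (Set.Icc a b))`. -/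
theorem permE_measurePreserving (m : Measure ℝ) [SFinite m] :
    MeasurePreserving (fun q : ℝ × ℝ × ℝ => ((q.2.1, q.1, q.2.2) : ℝ × ℝ × ℝ))
      (m.prod (m.prod m)) (m.prod (m.prod m)) := by
  have h1 := (measurePreserving_prodAssoc m m m).symm _
  have h2 : MeasurePreserving (Prod.map (Prod.swap : ℝ × ℝ → ℝ × ℝ) (id : ℝ → ℝ))
      ((m.prod m).prod m) ((m.prod m).prod m) :=
    MeasurePreserving.prod Measure.measurePreserving_swap (MeasurePreserving.id m)
  have h3 := measurePreserving_prodAssoc m m m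
  exact (h3.comp h2).comp h1

set_option maxHeartbeats 1000000 in
/-- Second-moment bound for `h(g) = ‖2∫_Ω f(·,y) g(y) dy‖_{L²}` where
`g ∼ GP(0,K)`: `E[h(g)²] = 4 tr(K F²) ≤ 4 ‖f‖²_{L²} ‖K‖_op` and hence
`E[h(g)] ≤ 2 ‖f‖_{L²} ‖K‖_op^{1/2}`. Here
`tr(K F²) = ∫∫ K(y,z) (∫ f(x,z) f(x,y) dx) dz dy`, `‖f‖²_{L²} = ∫∫ f²`, and
`‖K‖_op` is the operator norm of the integral operator `TK` with kernel `K`. -/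
theorem expectation_h_bound
    {W : Type*} [MeasurableSpace W] (μ : Measure W) [IsProbabilityMeasure μ]
    (a b : ℝ) (hab : a < b) (f K : ℝ → ℝ → ℝ)
    (hfc : ContinuousOn (fun p : ℝ × ℝ => f p.1 p.2) (Set.Icc a b ×ˢ Set.Icc a b))
    (hfsymm : ∀ x y, f x y = f y x)
    (hKc : Continuous fun p : ℝ × ℝ => K p.1 p.2)
    (hKsymm : ∀ x y, K x y = K y x)
    (hKpsd : ∀ (n : ℕ) (xs : Fin n → ℝ) (c : Fin n → ℝ),
      0 ≤ ∑ i, ∑ j, c i * K (xs i) (xs j) * c j)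
    (g : W → ℝ → ℝ)
    (hmean : ∀ x, ∫ ω, g ω x ∂μ = 0)
    (hcov : ∀ x y, ∫ ω, g ω x * g ω y ∂μ = K x y)
    (hint : Integrable
      (fun p : W × ℝ × ℝ × ℝ =>
        f p.2.2.1 p.2.1 * f p.2.2.1 p.2.2.2 * g p.1 p.2.1 * g p.1 p.2.2.2)
      (μ.prod ((volume.restrict (Set.Icc a b)).prod
        ((volume.restrict (Set.Icc a b)).prod (volume.restrict (Set.Icc a b))))))
    (TK : Lp ℝ 2 (volume.restrict (Set.Icc a b)) →L[ℝ]
      Lp ℝ 2 (volume.restrict (Set.Icc a b)))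
    (hTK : ∀ u : Lp ℝ 2 (volume.restrict (Set.Icc a b)),
      (TK u : ℝ → ℝ) =ᵐ[volume.restrict (Set.Icc a b)]
        fun x => ∫ y in Set.Icc a b, K x y * u y) :
    (∫ ω, (∫ x in Set.Icc a b,
        (2 * ∫ y in Set.Icc a b, f x y * g ω y) ^ 2) ∂μ)
      = 4 * ∫ y in Set.Icc a b, ∫ z in Set.Icc a b,
          K y z * ∫ x in Set.Icc a b, f x z * f x y ∧
    (4 * ∫ y in Set.Icc a b, ∫ z in Set.Icc a b,
          K y z * ∫ x in Set.Icc a b, f x z * f x y)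
      ≤ 4 * (∫ x in Set.Icc a b, ∫ y in Set.Icc a b, (f x y) ^ 2) * ‖TK‖ ∧
    (∫ ω, Real.sqrt (∫ x in Set.Icc a b,
        (2 * ∫ y in Set.Icc a b, f x y * g ω y) ^ 2) ∂μ)
      ≤ 2 * Real.sqrt (∫ x in Set.Icc a b, ∫ y in Set.Icc a b, (f x y) ^ 2)
          * Real.sqrt ‖TK‖ := by
  have hIm : MeasurableSet (Set.Icc a b) := measurableSet_Icc
  haveI : IsFiniteMeasure (volume.restrict (Set.Icc a b)) := by
    constructor
    rw [Measure.restrict_apply_univ, Real.volume_Icc]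
    exact ENNReal.ofReal_lt_top
  have haeI : ∀ᵐ y ∂(volume.restrict (Set.Icc a b)), y ∈ Set.Icc a b := ae_restrict_mem hIm
  -- boundedness of the kernels on the compact square
  have hIcompact : IsCompact ((Set.Icc a b) ×ˢ (Set.Icc a b)) := isCompact_Icc.prod isCompact_Icc
  obtain ⟨Mf, hMf⟩ := hIcompact.exists_bound_of_continuousOn hfc
  obtain ⟨MK, hMK⟩ := hIcompact.exists_bound_of_continuousOn hKc.continuousOn
  have haI : a ∈ (Set.Icc a b) := Set.mem_Icc.2 ⟨le_rfl, hab.le⟩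
  have hMf0 : 0 ≤ Mf := le_trans (norm_nonneg _) (hMf (a, a) ⟨haI, haI⟩)
  have hMK0 : 0 ≤ MK := le_trans (norm_nonneg _) (hMK (a, a) ⟨haI, haI⟩)
  -- the triple product measure as a restriction
  have hs3 : MeasurableSet ((Set.Icc a b) ×ˢ (Set.Icc a b) ×ˢ (Set.Icc a b)) := hIm.prod (hIm.prod hIm)
  have hs2 : MeasurableSet ((Set.Icc a b) ×ˢ (Set.Icc a b)) := hIm.prod hIm
  have hσr : (volume.restrict (Set.Icc a b)).prod ((volume.restrict (Set.Icc a b)).prod (volume.restrict (Set.Icc a b)))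
      = (volume.prod (volume.prod volume)).restrict ((Set.Icc a b) ×ˢ (Set.Icc a b) ×ˢ (Set.Icc a b)) := by
    rw [Measure.prod_restrict, Measure.prod_restrict]
  have hσ2r : (volume.restrict (Set.Icc a b)).prod (volume.restrict (Set.Icc a b)) = (volume.prod volume).restrict ((Set.Icc a b) ×ˢ (Set.Icc a b)) := by
    rw [Measure.prod_restrict]
  -- measure preserving permutation
  have he := permE_measurePreserving (volume.restrict (Set.Icc a b))
  have hemb : MeasurableEmbedding
      (fun q : ℝ × ℝ × ℝ => ((q.2.1, q.1, q.2.2) : ℝ × ℝ × ℝ)) :=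
    permE.measurableEmbedding
  -- integrability of the deterministic kernel  w (x,y,z) = f x y * f x z * K y z
  have hproj1 : ContinuousOn (fun q : ℝ × ℝ × ℝ => f q.1 q.2.1) ((Set.Icc a b) ×ˢ (Set.Icc a b) ×ˢ (Set.Icc a b)) :=
    hfc.comp (continuous_fst.prodMk (continuous_fst.comp continuous_snd)).continuousOn
      fun q hq => ⟨hq.1, hq.2.1⟩
  have hproj2 : ContinuousOn (fun q : ℝ × ℝ × ℝ => f q.1 q.2.2) ((Set.Icc a b) ×ˢ (Set.Icc a b) ×ˢ (Set.Icc a b)) :=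
    hfc.comp (continuous_fst.prodMk (continuous_snd.comp continuous_snd)).continuousOn
      fun q hq => ⟨hq.1, hq.2.2⟩
  have hprojK : Continuous (fun q : ℝ × ℝ × ℝ => K q.2.1 q.2.2) :=
    hKc.comp continuous_snd
  have hwc : ContinuousOn (fun q : ℝ × ℝ × ℝ => f q.1 q.2.1 * f q.1 q.2.2 * K q.2.1 q.2.2)
      ((Set.Icc a b) ×ˢ (Set.Icc a b) ×ˢ (Set.Icc a b)) := (hproj1.mul hproj2).mul hprojK.continuousOn
  have hw_meas : AEStronglyMeasurable
      (fun q : ℝ × ℝ × ℝ => f q.1 q.2.1 * f q.1 q.2.2 * K q.2.1 q.2.2)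
      ((volume.restrict (Set.Icc a b)).prod ((volume.restrict (Set.Icc a b)).prod (volume.restrict (Set.Icc a b)))) := by
    rw [hσr]; exact hwc.aestronglyMeasurable hs3
  have hw_ae3 : ∀ᵐ q ∂((volume.restrict (Set.Icc a b)).prod ((volume.restrict (Set.Icc a b)).prod (volume.restrict (Set.Icc a b)))), q ∈ (Set.Icc a b) ×ˢ (Set.Icc a b) ×ˢ (Set.Icc a b) := by
    rw [hσr]; exact ae_restrict_mem hs3
  have hw_int : Integrable
      (fun q : ℝ × ℝ × ℝ => f q.1 q.2.1 * f q.1 q.2.2 * K q.2.1 q.2.2)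
      ((volume.restrict (Set.Icc a b)).prod ((volume.restrict (Set.Icc a b)).prod (volume.restrict (Set.Icc a b)))) := by
    refine Integrable.mono' (integrable_const (Mf * Mf * MK)) hw_meas ?_
    filter_upwards [hw_ae3] with q hq
    have h1 := hMf (q.1, q.2.1) ⟨hq.1, hq.2.1⟩
    have h2 := hMf (q.1, q.2.2) ⟨hq.1, hq.2.2⟩
    have h3 := hMK (q.2.1, q.2.2) ⟨hq.2.1, hq.2.2⟩
    calc ‖f q.1 q.2.1 * f q.1 q.2.2 * K q.2.1 q.2.2‖
        = ‖f q.1 q.2.1‖ * ‖f q.1 q.2.2‖ * ‖K q.2.1 q.2.2‖ := by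
          rw [norm_mul, norm_mul]
      _ ≤ Mf * Mf * MK := by
          refine mul_le_mul (mul_le_mul h1 h2 (norm_nonneg _) hMf0) h3 (norm_nonneg _) ?_
          positivity
  -- integrability of f² on the square
  have hf2_int : Integrable (fun p : ℝ × ℝ => (f p.1 p.2) ^ 2) ((volume.restrict (Set.Icc a b)).prod (volume.restrict (Set.Icc a b))) := by
    have hmeas : AEStronglyMeasurable (fun p : ℝ × ℝ => (f p.1 p.2) ^ 2) ((volume.restrict (Set.Icc a b)).prod (volume.restrict (Set.Icc a b))) := by
      rw [hσ2r]; exact (hfc.pow 2).aestronglyMeasurable hs2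
    have hae2 : ∀ᵐ p ∂((volume.restrict (Set.Icc a b)).prod (volume.restrict (Set.Icc a b))), p ∈ (Set.Icc a b) ×ˢ (Set.Icc a b) := by
      rw [hσ2r]; exact ae_restrict_mem hs2
    refine Integrable.mono' (integrable_const (Mf * Mf)) hmeas ?_
    filter_upwards [hae2] with p hp
    have h1 := hMf p hp
    calc ‖(f p.1 p.2) ^ 2‖ = ‖f p.1 p.2‖ * ‖f p.1 p.2‖ := by
          rw [sq, norm_mul]
      _ ≤ Mf * Mf := mul_le_mul h1 h1 (norm_nonneg _) hMf0
  -- `P q = w (perm q)` is integrable, where `P (y,x,z) = f x y * f x z * K y z`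
  have hP_int : Integrable
      (fun q : ℝ × ℝ × ℝ => f q.2.1 q.1 * f q.2.1 q.2.2 * K q.1 q.2.2)
      ((volume.restrict (Set.Icc a b)).prod ((volume.restrict (Set.Icc a b)).prod (volume.restrict (Set.Icc a b)))) :=
    (he.integrable_comp_emb hemb).2 hw_int
  -- ∫ P = ∫ w  (change of variables)
  have hPw : (∫ q : ℝ × ℝ × ℝ, f q.2.1 q.1 * f q.2.1 q.2.2 * K q.1 q.2.2 ∂((volume.restrict (Set.Icc a b)).prod ((volume.restrict (Set.Icc a b)).prod (volume.restrict (Set.Icc a b)))))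
      = ∫ q : ℝ × ℝ × ℝ, f q.1 q.2.1 * f q.1 q.2.2 * K q.2.1 q.2.2 ∂((volume.restrict (Set.Icc a b)).prod ((volume.restrict (Set.Icc a b)).prod (volume.restrict (Set.Icc a b)))) :=
    he.integral_comp hemb
      (fun q : ℝ × ℝ × ℝ => f q.1 q.2.1 * f q.1 q.2.2 * K q.2.1 q.2.2)
  -- ∫ P equals the iterated trace integral
  have hSP : (∫ q : ℝ × ℝ × ℝ, f q.2.1 q.1 * f q.2.1 q.2.2 * K q.1 q.2.2 ∂((volume.restrict (Set.Icc a b)).prod ((volume.restrict (Set.Icc a b)).prod (volume.restrict (Set.Icc a b)))))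
      = ∫ y in (Set.Icc a b), ∫ z in (Set.Icc a b), K y z * ∫ x in (Set.Icc a b), f x z * f x y := by
    rw [integral_prod _ hP_int]
    refine integral_congr_ae ?_
    filter_upwards [hP_int.prod_right_ae] with y hy
    rw [integral_prod_symm _ hy]
    refine integral_congr_ae (Filter.Eventually.of_forall fun z => ?_)
    simp only
    rw [← integral_const_mul _ _]
    refine integral_congr_ae (Filter.Eventually.of_forall fun x => ?_)
    simp only
    ring
  -- Fubini in ω: the full 4-fold integral equals ∫ P
  have hJP : (∫ p : W × ℝ × ℝ × ℝ,
        f p.2.2.1 p.2.1 * f p.2.2.1 p.2.2.2 * g p.1 p.2.1 * g p.1 p.2.2.2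
        ∂(μ.prod ((volume.restrict (Set.Icc a b)).prod ((volume.restrict (Set.Icc a b)).prod (volume.restrict (Set.Icc a b))))))
      = ∫ q : ℝ × ℝ × ℝ, f q.2.1 q.1 * f q.2.1 q.2.2 * K q.1 q.2.2 ∂((volume.restrict (Set.Icc a b)).prod ((volume.restrict (Set.Icc a b)).prod (volume.restrict (Set.Icc a b)))) := by
    rw [integral_prod_symm _ hint]
    refine integral_congr_ae (Filter.Eventually.of_forall fun q => ?_)
    simp only
    have h1 : (fun ω => f q.2.1 q.1 * f q.2.1 q.2.2 * g ω q.1 * g ω q.2.2)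
        = fun ω => (f q.2.1 q.1 * f q.2.1 q.2.2) * (g ω q.1 * g ω q.2.2) := by
      funext ω; ring
    rw [h1, integral_const_mul _ _, hcov]
  -- pointwise (in ω) expansion of the square of the random integral
  have hA : ∀ᵐ ω ∂μ, (∫ x in (Set.Icc a b), (2 * ∫ y in (Set.Icc a b), f x y * g ω y) ^ 2)
      = 4 * ∫ q : ℝ × ℝ × ℝ,
          f q.2.1 q.1 * f q.2.1 q.2.2 * g ω q.1 * g ω q.2.2 ∂((volume.restrict (Set.Icc a b)).prod ((volume.restrict (Set.Icc a b)).prod (volume.restrict (Set.Icc a b)))) := by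
    filter_upwards [hint.prod_right_ae] with ω hω
    have hv : Integrable
        (fun q : ℝ × ℝ × ℝ => (f q.1 q.2.1 * g ω q.2.1) * (f q.1 q.2.2 * g ω q.2.2))
        ((volume.restrict (Set.Icc a b)).prod ((volume.restrict (Set.Icc a b)).prod (volume.restrict (Set.Icc a b)))) := by
      refine (he.integrable_comp_emb hemb).1 ?_
      refine hω.congr (Filter.Eventually.of_forall fun q => ?_)
      simp only [Function.comp]
      ring
    calc (∫ x in (Set.Icc a b), (2 * ∫ y in (Set.Icc a b), f x y * g ω y) ^ 2)
        = ∫ x in (Set.Icc a b), 4 * ((∫ y in (Set.Icc a b), f x y * g ω y) * (∫ y in (Set.Icc a b), f x y * g ω y)) := by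
          refine integral_congr_ae (Filter.Eventually.of_forall fun x => ?_)
          ring
      _ = 4 * ∫ x in (Set.Icc a b), (∫ y in (Set.Icc a b), f x y * g ω y) * (∫ y in (Set.Icc a b), f x y * g ω y) :=
          integral_const_mul _ _
      _ = 4 * ∫ x in (Set.Icc a b), (∫ p : ℝ × ℝ,
            (f x p.1 * g ω p.1) * (f x p.2 * g ω p.2) ∂((volume.restrict (Set.Icc a b)).prod (volume.restrict (Set.Icc a b)))) := by
          congr 1
          refine integral_congr_ae (Filter.Eventually.of_forall fun x => ?_)
          simp only
          exact (integral_prod_mul (fun y => f x y * g ω y) (fun z => f x z * g ω z)).symm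
      _ = 4 * ∫ q : ℝ × ℝ × ℝ,
            (f q.1 q.2.1 * g ω q.2.1) * (f q.1 q.2.2 * g ω q.2.2) ∂((volume.restrict (Set.Icc a b)).prod ((volume.restrict (Set.Icc a b)).prod (volume.restrict (Set.Icc a b)))) := by
          congr 1
          exact (integral_prod _ hv).symm
      _ = 4 * ∫ q : ℝ × ℝ × ℝ,
            (f q.2.1 q.1 * g ω q.1) * (f q.2.1 q.2.2 * g ω q.2.2) ∂((volume.restrict (Set.Icc a b)).prod ((volume.restrict (Set.Icc a b)).prod (volume.restrict (Set.Icc a b)))) := by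
          congr 1
          exact (he.integral_comp hemb
            (fun q : ℝ × ℝ × ℝ =>
              (f q.1 q.2.1 * g ω q.2.1) * (f q.1 q.2.2 * g ω q.2.2))).symm
      _ = 4 * ∫ q : ℝ × ℝ × ℝ,
            f q.2.1 q.1 * f q.2.1 q.2.2 * g ω q.1 * g ω q.2.2 ∂((volume.restrict (Set.Icc a b)).prod ((volume.restrict (Set.Icc a b)).prod (volume.restrict (Set.Icc a b)))) := by
          congr 1
          refine integral_congr_ae (Filter.Eventually.of_forall fun q => ?_)
          ring
  -- CONJUNCT 1
  have hEq1 : (∫ ω, (∫ x in (Set.Icc a b), (2 * ∫ y in (Set.Icc a b), f x y * g ω y) ^ 2) ∂μ)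
      = 4 * ∫ y in (Set.Icc a b), ∫ z in (Set.Icc a b), K y z * ∫ x in (Set.Icc a b), f x z * f x y := by
    calc (∫ ω, (∫ x in (Set.Icc a b), (2 * ∫ y in (Set.Icc a b), f x y * g ω y) ^ 2) ∂μ)
        = ∫ ω, 4 * ∫ q : ℝ × ℝ × ℝ,
            f q.2.1 q.1 * f q.2.1 q.2.2 * g ω q.1 * g ω q.2.2 ∂((volume.restrict (Set.Icc a b)).prod ((volume.restrict (Set.Icc a b)).prod (volume.restrict (Set.Icc a b)))) ∂μ :=
          integral_congr_ae hA
      _ = 4 * ∫ ω, ∫ q : ℝ × ℝ × ℝ,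
            f q.2.1 q.1 * f q.2.1 q.2.2 * g ω q.1 * g ω q.2.2 ∂((volume.restrict (Set.Icc a b)).prod ((volume.restrict (Set.Icc a b)).prod (volume.restrict (Set.Icc a b)))) ∂μ :=
          integral_const_mul _ _
      _ = 4 * ∫ p : W × ℝ × ℝ × ℝ,
            f p.2.2.1 p.2.1 * f p.2.2.1 p.2.2.2 * g p.1 p.2.1 * g p.1 p.2.2.2
            ∂(μ.prod ((volume.restrict (Set.Icc a b)).prod ((volume.restrict (Set.Icc a b)).prod (volume.restrict (Set.Icc a b))))) := by
          congr 1
          exact (integral_prod _ hint).symm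
      _ = 4 * ∫ y in (Set.Icc a b), ∫ z in (Set.Icc a b), K y z * ∫ x in (Set.Icc a b), f x z * f x y := by
          rw [hJP, hSP]
  -- CONJUNCT 2 : trace bound
  have hw_le : (∫ q : ℝ × ℝ × ℝ, f q.1 q.2.1 * f q.1 q.2.2 * K q.2.1 q.2.2
        ∂((volume.restrict (Set.Icc a b)).prod ((volume.restrict (Set.Icc a b)).prod (volume.restrict (Set.Icc a b)))))
      ≤ ‖TK‖ * ∫ x in (Set.Icc a b), ∫ y in (Set.Icc a b), (f x y) ^ 2 := by
    have hBint : Integrable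
        (fun x => ∫ p : ℝ × ℝ, f x p.1 * f x p.2 * K p.1 p.2 ∂((volume.restrict (Set.Icc a b)).prod (volume.restrict (Set.Icc a b)))) (volume.restrict (Set.Icc a b)) :=
      hw_int.integral_prod_left
    have hf2'int : Integrable (fun x => ∫ y in (Set.Icc a b), (f x y) ^ 2) (volume.restrict (Set.Icc a b)) :=
      hf2_int.integral_prod_left
    have hae : ∀ᵐ x ∂(volume.restrict (Set.Icc a b)), (∫ p : ℝ × ℝ, f x p.1 * f x p.2 * K p.1 p.2 ∂((volume.restrict (Set.Icc a b)).prod (volume.restrict (Set.Icc a b))))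
        ≤ ‖TK‖ * ∫ y in (Set.Icc a b), (f x y) ^ 2 := by
      filter_upwards [hw_int.prod_right_ae, haeI] with x hx hxI
      -- the L² element corresponding to f x
      have hfxc : ContinuousOn (fun y => f x y) (Set.Icc a b) :=
        hfc.comp (continuous_const.prodMk continuous_id).continuousOn
          fun y hy => ⟨hxI, hy⟩
      have hfxm : AEStronglyMeasurable (fun y => f x y) (volume.restrict (Set.Icc a b)) :=
        hfxc.aestronglyMeasurable hIm
      have hfx2 : MemLp (fun y => f x y) 2 (volume.restrict (Set.Icc a b)) := by
        refine MemLp.of_bound hfxm Mf ?_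
        filter_upwards [haeI] with y hy
        exact hMf (x, y) ⟨hxI, hy⟩
      set u : Lp ℝ 2 (volume.restrict (Set.Icc a b)) := hfx2.toLp _ with hudef
      have hu : (u : ℝ → ℝ) =ᵐ[(volume.restrict (Set.Icc a b))] fun y => f x y := hfx2.coeFn_toLp
      have hTKu : (TK u : ℝ → ℝ) =ᵐ[(volume.restrict (Set.Icc a b))] fun t => ∫ z in (Set.Icc a b), K t z * f x z := by
        refine (hTK u).trans (Filter.Eventually.of_forall fun t => ?_)
        refine integral_congr_ae ?_
        filter_upwards [hu] with z hz
        rw [hz]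
      have h1 : (∫ p : ℝ × ℝ, f x p.1 * f x p.2 * K p.1 p.2 ∂((volume.restrict (Set.Icc a b)).prod (volume.restrict (Set.Icc a b))))
          = ∫ y in (Set.Icc a b), f x y * ∫ z in (Set.Icc a b), K y z * f x z := by
        rw [integral_prod _ hx]
        refine integral_congr_ae (Filter.Eventually.of_forall fun y => ?_)
        simp only
        rw [← integral_const_mul _ _]
        refine integral_congr_ae (Filter.Eventually.of_forall fun z => ?_)
        simp only
        ring
      have h2 : (∫ y in (Set.Icc a b), f x y * ∫ z in (Set.Icc a b), K y z * f x z) = ⟪u, TK u⟫ := by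
        rw [L2.inner_def]
        refine (integral_congr_ae ?_).symm
        filter_upwards [hu, hTKu] with t h1t h2t
        rw [RCLike.inner_apply, conj_trivial, h1t, h2t, mul_comm]
      have h4 : ‖u‖ ^ 2 = ∫ y in (Set.Icc a b), (f x y) ^ 2 := by
        rw [← real_inner_self_eq_norm_sq, L2.inner_def]
        refine integral_congr_ae ?_
        filter_upwards [hu] with t ht
        rw [RCLike.inner_apply, conj_trivial, ht]
        ring
      have h3 : ⟪u, TK u⟫ ≤ ‖TK‖ * ‖u‖ ^ 2 := by
        calc ⟪u, TK u⟫ ≤ ‖u‖ * ‖TK u‖ := real_inner_le_norm _ _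
          _ ≤ ‖u‖ * (‖TK‖ * ‖u‖) :=
            mul_le_mul_of_nonneg_left (TK.le_opNorm u) (norm_nonneg _)
          _ = ‖TK‖ * ‖u‖ ^ 2 := by ring
      rw [h1, h2, ← h4]
      exact h3
    calc (∫ q : ℝ × ℝ × ℝ, f q.1 q.2.1 * f q.1 q.2.2 * K q.2.1 q.2.2 ∂((volume.restrict (Set.Icc a b)).prod ((volume.restrict (Set.Icc a b)).prod (volume.restrict (Set.Icc a b)))))
        = ∫ x, (∫ p : ℝ × ℝ, f x p.1 * f x p.2 * K p.1 p.2 ∂((volume.restrict (Set.Icc a b)).prod (volume.restrict (Set.Icc a b)))) ∂(volume.restrict (Set.Icc a b)) :=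
          integral_prod _ hw_int
      _ ≤ ∫ x in Set.Icc a b, ‖TK‖ * ∫ y in Set.Icc a b, (f x y) ^ 2 :=
          integral_mono_ae hBint (hf2'int.const_mul _) hae
      _ = ‖TK‖ * ∫ x in (Set.Icc a b), ∫ y in (Set.Icc a b), (f x y) ^ 2 := integral_const_mul _ _
  have hF2 : 0 ≤ ∫ x in (Set.Icc a b), ∫ y in (Set.Icc a b), (f x y) ^ 2 :=
    integral_nonneg fun x => integral_nonneg fun y => sq_nonneg _
  have hS_le : (∫ y in (Set.Icc a b), ∫ z in (Set.Icc a b), K y z * ∫ x in (Set.Icc a b), f x z * f x y)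
      ≤ (∫ x in (Set.Icc a b), ∫ y in (Set.Icc a b), (f x y) ^ 2) * ‖TK‖ := by
    rw [← hSP, hPw, mul_comm]
    exact hw_le
  have hEq2 : (4 * ∫ y in (Set.Icc a b), ∫ z in (Set.Icc a b), K y z * ∫ x in (Set.Icc a b), f x z * f x y)
      ≤ 4 * (∫ x in (Set.Icc a b), ∫ y in (Set.Icc a b), (f x y) ^ 2) * ‖TK‖ := by
    calc (4 * ∫ y in (Set.Icc a b), ∫ z in (Set.Icc a b), K y z * ∫ x in (Set.Icc a b), f x z * f x y)
        ≤ 4 * ((∫ x in (Set.Icc a b), ∫ y in (Set.Icc a b), (f x y) ^ 2) * ‖TK‖) := by linarith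
      _ = 4 * (∫ x in (Set.Icc a b), ∫ y in (Set.Icc a b), (f x y) ^ 2) * ‖TK‖ := by ring
  refine ⟨hEq1, hEq2, ?_⟩
  -- CONJUNCT 3
  have hq0 : ∀ ω, 0 ≤ ∫ x in (Set.Icc a b), (2 * ∫ y in (Set.Icc a b), f x y * g ω y) ^ 2 :=
    fun ω => integral_nonneg fun x => sq_nonneg _
  have hsect_int : Integrable (fun ω => ∫ q : ℝ × ℝ × ℝ,
      f q.2.1 q.1 * f q.2.1 q.2.2 * g ω q.1 * g ω q.2.2 ∂((volume.restrict (Set.Icc a b)).prod ((volume.restrict (Set.Icc a b)).prod (volume.restrict (Set.Icc a b))))) μ :=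
    hint.integral_prod_left
  have hq_int : Integrable (fun ω => ∫ x in (Set.Icc a b), (2 * ∫ y in (Set.Icc a b), f x y * g ω y) ^ 2) μ := by
    refine (hsect_int.const_mul 4).congr ?_
    filter_upwards [hA] with ω hω
    exact hω.symm
  have h2' : ENNReal.ofReal (2 : ℝ) = 2 := by
    rw [ENNReal.ofReal_ofNat]
  have hpq : (2 : ℝ).HolderConjugate 2 := Real.HolderConjugate.two_two
  have hmem1 : MemLp (fun _ : W => (1 : ℝ)) (ENNReal.ofReal 2) μ := by
    rw [h2']; exact memLp_const 1
  have hmemsq : MemLp (fun ω => Real.sqrt (∫ x in (Set.Icc a b), (2 * ∫ y in (Set.Icc a b), f x y * g ω y) ^ 2))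
      (ENNReal.ofReal 2) μ := by
    rw [h2']
    refine (memLp_two_iff_integrable_sq ?_).2 ?_
    · exact Real.continuous_sqrt.comp_aestronglyMeasurable hq_int.aestronglyMeasurable
    · exact hq_int.congr (Filter.Eventually.of_forall fun ω => (Real.sq_sqrt (hq0 ω)).symm)
  have hCS := integral_mul_le_Lp_mul_Lq_of_nonneg hpq
    (Filter.Eventually.of_forall fun ω => Real.sqrt_nonneg _)
    (Filter.Eventually.of_forall fun ω => zero_le_one) hmemsq hmem1
  have hCS' : (∫ ω, Real.sqrt (∫ x in (Set.Icc a b), (2 * ∫ y in (Set.Icc a b), f x y * g ω y) ^ 2) ∂μ)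
      ≤ (∫ ω, (∫ x in (Set.Icc a b), (2 * ∫ y in (Set.Icc a b), f x y * g ω y) ^ 2) ∂μ) ^ ((1 : ℝ) / 2) := by
    have e1 : (∫ ω, Real.sqrt (∫ x in (Set.Icc a b), (2 * ∫ y in (Set.Icc a b), f x y * g ω y) ^ 2) * (1 : ℝ) ∂μ)
        = ∫ ω, Real.sqrt (∫ x in (Set.Icc a b), (2 * ∫ y in (Set.Icc a b), f x y * g ω y) ^ 2) ∂μ := by
      simp
    have e2 : (∫ ω, Real.sqrt (∫ x in (Set.Icc a b), (2 * ∫ y in (Set.Icc a b), f x y * g ω y) ^ 2) ^ (2 : ℝ) ∂μ)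
        = ∫ ω, (∫ x in (Set.Icc a b), (2 * ∫ y in (Set.Icc a b), f x y * g ω y) ^ 2) ∂μ := by
      refine integral_congr_ae (Filter.Eventually.of_forall fun ω => ?_)
      show Real.sqrt (∫ x in Set.Icc a b, (2 * ∫ y in Set.Icc a b, f x y * g ω y) ^ 2) ^ (2 : ℝ)
        = _
      rw [Real.rpow_two, Real.sq_sqrt (hq0 ω)]
    have e3 : (∫ _ω : W, (1 : ℝ) ^ (2 : ℝ) ∂μ) ^ ((1 : ℝ) / 2) = 1 := by
      simp
    rw [e1, e2, e3, mul_one] at hCS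
    exact hCS
  have hq_nonneg : 0 ≤ ∫ ω, (∫ x in (Set.Icc a b), (2 * ∫ y in (Set.Icc a b), f x y * g ω y) ^ 2) ∂μ :=
    integral_nonneg fun ω => hq0 ω
  have hN : (0 : ℝ) ≤ ‖TK‖ := norm_nonneg _
  calc (∫ ω, Real.sqrt (∫ x in (Set.Icc a b), (2 * ∫ y in (Set.Icc a b), f x y * g ω y) ^ 2) ∂μ)
      ≤ (∫ ω, (∫ x in (Set.Icc a b), (2 * ∫ y in (Set.Icc a b), f x y * g ω y) ^ 2) ∂μ) ^ ((1 : ℝ) / 2) := hCS'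
    _ = Real.sqrt (∫ ω, (∫ x in (Set.Icc a b), (2 * ∫ y in (Set.Icc a b), f x y * g ω y) ^ 2) ∂μ) :=
        (Real.sqrt_eq_rpow _).symm
    _ ≤ Real.sqrt (4 * (∫ x in (Set.Icc a b), ∫ y in (Set.Icc a b), (f x y) ^ 2) * ‖TK‖) := by
        refine Real.sqrt_le_sqrt ?_
        rw [hEq1]
        exact hEq2
    _ = 2 * Real.sqrt (∫ x in (Set.Icc a b), ∫ y in (Set.Icc a b), (f x y) ^ 2) * Real.sqrt ‖TK‖ := by
        rw [show 4 * (∫ x in (Set.Icc a b), ∫ y in (Set.Icc a b), (f x y) ^ 2) * ‖TK‖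
            = (2 * Real.sqrt (∫ x in (Set.Icc a b), ∫ y in (Set.Icc a b), (f x y) ^ 2) * Real.sqrt ‖TK‖) ^ 2 by
          rw [mul_pow, mul_pow, Real.sq_sqrt hF2, Real.sq_sqrt hN]; ring]
        exact Real.sqrt_sq (by positivity)
end
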